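/- For every integer k ≥ 1, define h := f^k where f(z) = 4z(1−z), a polynomial of degree 2^k. There exists a Borel probability measure μ on [0,1], continuous and positive on all of [0,1], such that every polynomial g : ℝ → ℝ of degree at most 2^{k−3} satisfies ∫₀¹ |h − g| dμ ≥ 1/32. -/

import Mathlib

open MeasureTheory
open scoped ENNReal

noncomputable section

open Real intervalIntegral

lemma cos_mul_cos' (x y : ℝ) : Real.cos x * Real.cos y
    = (Real.cos (x + y) + Real.cos (x - y)) / 2 := by
  rw [Real.cos_add, Real.cos_sub]; ring

lemma iter_f (k : ℕ) (θ : ℝ) :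
    (fun z : ℝ => 4 * z * (1 - z))^[k] (Real.sin θ ^ 2)
      = Real.sin (2 ^ k * θ) ^ 2 := by
  induction k generalizing θ with
  | zero => simp
  | succ n ih =>
    rw [Function.iterate_succ_apply]
    have h1 : 4 * Real.sin θ ^ 2 * (1 - Real.sin θ ^ 2) = Real.sin (2 * θ) ^ 2 := by
      rw [Real.sin_two_mul]
      have := Real.sin_sq_add_cos_sq θ
      nlinarith [Real.sin_sq_add_cos_sq θ]
    simp only [h1]
    rw [ih (2 * θ)]
    ring_nf

lemma integral_cos_freq (j : ℕ) (hj : 1 ≤ j) :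
    ∫ t in (0:ℝ)..1, Real.cos ((j : ℝ) * Real.pi * t) = 0 := by
  have hc : (j : ℝ) * Real.pi ≠ 0 := by
    positivity
  have := integral_comp_mul_left (a := (0:ℝ)) (b := 1) (fun x => Real.cos x) hc
  simp only [mul_zero, mul_one] at this
  rw [show (fun t => Real.cos ((j:ℝ) * Real.pi * t)) = fun t => Real.cos (((j:ℝ)*Real.pi) * t) from rfl]
  rw [this, integral_cos, Real.sin_zero, Real.sin_nat_mul_pi]
  simp

lemma ortho (m : ℕ) : ∀ j : ℕ, m < j →
    ∫ t in (0:ℝ)..1, Real.cos (Real.pi * t) ^ m * Real.cos ((j : ℝ) * Real.pi * t) = 0 := by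
  induction m with
  | zero =>
    intro j hj
    simp only [pow_zero, one_mul]
    exact integral_cos_freq j hj
  | succ m ih =>
    intro j hj
    have hj1 : 1 ≤ j := by omega
    have key : ∀ t : ℝ, Real.cos (Real.pi * t) ^ (m+1) * Real.cos ((j:ℝ) * Real.pi * t) =
        (Real.cos (Real.pi * t) ^ m * Real.cos (((j:ℝ)+1) * Real.pi * t)
        + Real.cos (Real.pi * t) ^ m * Real.cos (((j:ℝ)-1) * Real.pi * t)) / 2 := by
      intro t
      have := cos_mul_cos' (Real.pi * t) ((j:ℝ) * Real.pi * t)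
      have e1 : Real.pi * t + (j:ℝ) * Real.pi * t = ((j:ℝ)+1) * Real.pi * t := by ring
      have e2 : Real.pi * t - (j:ℝ) * Real.pi * t = -(((j:ℝ)-1) * Real.pi * t) := by ring
      rw [e1, e2, Real.cos_neg] at this
      calc Real.cos (Real.pi * t) ^ (m+1) * Real.cos ((j:ℝ) * Real.pi * t)
          = Real.cos (Real.pi * t) ^ m * (Real.cos (Real.pi * t) * Real.cos ((j:ℝ) * Real.pi * t)) := by ring
        _ = _ := by rw [this]; ring
    rw [intervalIntegral.integral_congr (fun t _ => key t)]
    have i1 : IntervalIntegrable (fun t => Real.cos (Real.pi * t) ^ m * Real.cos (((j:ℝ)+1) * Real.pi * t)) volume 0 1 := by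
      apply Continuous.intervalIntegrable; continuity
    have i2 : IntervalIntegrable (fun t => Real.cos (Real.pi * t) ^ m * Real.cos (((j:ℝ)-1) * Real.pi * t)) volume 0 1 := by
      apply Continuous.intervalIntegrable; continuity
    rw [show (fun t => (Real.cos (Real.pi * t) ^ m * Real.cos (((j:ℝ)+1) * Real.pi * t)
        + Real.cos (Real.pi * t) ^ m * Real.cos (((j:ℝ)-1) * Real.pi * t)) / 2)
      = fun t => (2:ℝ)⁻¹ * (Real.cos (Real.pi * t) ^ m * Real.cos (((j:ℝ)+1) * Real.pi * t)
        + Real.cos (Real.pi * t) ^ m * Real.cos (((j:ℝ)-1) * Real.pi * t)) from by funext t; ring]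
    rw [intervalIntegral.integral_const_mul, intervalIntegral.integral_add i1 i2]
    have h1 : ∫ t in (0:ℝ)..1, Real.cos (Real.pi * t) ^ m * Real.cos (((j:ℝ)+1) * Real.pi * t) = 0 := by
      have := ih (j+1) (by omega)
      push_cast at this
      exact this
    have h2 : ∫ t in (0:ℝ)..1, Real.cos (Real.pi * t) ^ m * Real.cos (((j:ℝ)-1) * Real.pi * t) = 0 := by
      have hm : m < j - 1 := by omega
      have := ih (j-1) hm
      have hc : ((j - 1 : ℕ) : ℝ) = (j:ℝ) - 1 := by
        push_cast [Nat.cast_sub hj1]; ring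
      rw [hc] at this
      exact this
    rw [h1, h2]; simp

lemma integral_cos_sq_freq (j : ℕ) (hj : 1 ≤ j) :
    ∫ t in (0:ℝ)..1, Real.cos ((j : ℝ) * Real.pi * t) ^ 2 = 1/2 := by
  have hb : (0:ℝ) < (j : ℝ) * Real.pi := by positivity
  have h := integral_comp_mul_left (a := (0:ℝ)) (b := 1) (fun x => Real.cos x ^ 2) hb.ne'
  simp only [mul_zero, mul_one] at h
  calc ∫ t in (0:ℝ)..1, Real.cos ((j : ℝ) * Real.pi * t) ^ 2
      = ((j : ℝ) * Real.pi)⁻¹ • ∫ x in (0:ℝ)..((j:ℝ)*Real.pi), Real.cos x ^ 2 := h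
    _ = 1/2 := by
        rw [integral_cos_sq, Real.sin_nat_mul_pi, Real.sin_zero, smul_eq_mul]
        field_simp
        ring

lemma integral_h_cos (j : ℕ) (hj : 1 ≤ j) :
    ∫ t in (0:ℝ)..1, ((1 - Real.cos ((j:ℝ) * Real.pi * t))/2) * Real.cos ((j:ℝ) * Real.pi * t)
      = -(1/4) := by
  have e : ∀ t : ℝ, ((1 - Real.cos ((j:ℝ) * Real.pi * t))/2) * Real.cos ((j:ℝ) * Real.pi * t)
      = (1/2) * Real.cos ((j:ℝ) * Real.pi * t) - (1/2) * Real.cos ((j:ℝ) * Real.pi * t) ^ 2 := by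
    intro t; ring
  rw [intervalIntegral.integral_congr (fun t _ => e t)]
  have i1 : IntervalIntegrable (fun t => (1/2 : ℝ) * Real.cos ((j:ℝ) * Real.pi * t)) volume 0 1 := by
    apply Continuous.intervalIntegrable; continuity
  have i2 : IntervalIntegrable (fun t => (1/2 : ℝ) * Real.cos ((j:ℝ) * Real.pi * t) ^ 2) volume 0 1 := by
    apply Continuous.intervalIntegrable; continuity
  rw [intervalIntegral.integral_sub i1 i2, intervalIntegral.integral_const_mul,
    intervalIntegral.integral_const_mul, integral_cos_freq j hj, integral_cos_sq_freq j hj]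
  norm_num

lemma integral_g_cos (g : Polynomial ℝ) (N : ℕ) (hN : g.natDegree < N) :
    ∫ t in (0:ℝ)..1, g.eval ((1 - Real.cos (Real.pi * t))/2) * Real.cos ((N:ℝ) * Real.pi * t)
      = 0 := by
  set q : Polynomial ℝ := g.comp (Polynomial.C (1/2 : ℝ) * (1 - Polynomial.X)) with hq
  have hqdeg : q.natDegree ≤ g.natDegree := by
    refine le_trans (Polynomial.natDegree_comp_le) ?_
    have h1 : (Polynomial.C (1/2 : ℝ) * (1 - Polynomial.X)).natDegree ≤ 1 := by
      refine le_trans (Polynomial.natDegree_mul_le) ?_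
      simp only [Polynomial.natDegree_C, zero_add]
      refine le_trans (Polynomial.natDegree_sub_le _ _) ?_
      simp
    calc g.natDegree * (Polynomial.C (1/2 : ℝ) * (1 - Polynomial.X)).natDegree
        ≤ g.natDegree * 1 := Nat.mul_le_mul_left _ h1
      _ = g.natDegree := by ring
  have heval : ∀ y : ℝ, q.eval y = g.eval ((1 - y)/2) := by
    intro y
    rw [hq, Polynomial.eval_comp]
    simp only [Polynomial.eval_mul, Polynomial.eval_C, Polynomial.eval_sub, Polynomial.eval_one,
      Polynomial.eval_X]
    ring_nf
  have e : ∀ t : ℝ, g.eval ((1 - Real.cos (Real.pi * t))/2) * Real.cos ((N:ℝ) * Real.pi * t)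
      = ∑ i ∈ Finset.range (q.natDegree + 1),
          q.coeff i * (Real.cos (Real.pi * t) ^ i * Real.cos ((N:ℝ) * Real.pi * t)) := by
    intro t
    rw [← heval, Polynomial.eval_eq_sum_range, Finset.sum_mul]
    congr 1; funext i; ring
  rw [intervalIntegral.integral_congr (fun t _ => e t)]
  rw [intervalIntegral.integral_finset_sum]
  · refine Finset.sum_eq_zero fun i hi => ?_
    rw [intervalIntegral.integral_const_mul, ortho i N ?_, mul_zero]
    have : i ≤ q.natDegree := Nat.lt_succ_iff.mp (Finset.mem_range.mp hi)
    omega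
  · intro i _
    exact (Continuous.mul continuous_const ((Real.continuous_cos.comp
      (continuous_const.mul continuous_id)).pow i |>.mul
      (Real.continuous_cos.comp (continuous_const.mul continuous_id)))).intervalIntegrable _ _

/-- Corollary A.1: there is a continuous probability measure, positive on `[0,1]`,
with respect to which the degree-`2^k` polynomial `h = (4z(1−z))^k` is far in `L¹`
from every polynomial of degree at most `2^(k−3)`. -/
theorem poly_inapprox (k : ℕ) (hk : 1 ≤ k) :
    ∃ μ : Measure ℝ, IsProbabilityMeasure μ ∧
      μ (Set.Icc (0:ℝ) 1)ᶜ = 0 ∧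
      (∀ x : ℝ, μ {x} = 0) ∧
      (∀ U : Set ℝ, IsOpen U → (U ∩ Set.Icc (0:ℝ) 1).Nonempty → 0 < μ U) ∧
      ∀ g : Polynomial ℝ, g.natDegree ≤ 2 ^ (k - 3) →
        (∫ x, |(fun z : ℝ => 4 * z * (1 - z))^[k] x - g.eval x| ∂μ) ≥ 1 / 32 := by
  set φ : ℝ → ℝ := fun t => Real.sin (Real.pi * t / 2) ^ 2 with hφdef
  have hφc : Continuous φ := by fun_prop
  have hφhalf : ∀ t : ℝ, φ t = (1 - Real.cos (Real.pi * t)) / 2 := by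
    intro t
    have := Real.sin_sq_eq_half_sub (Real.pi * t / 2)
    rw [hφdef]
    simp only
    rw [this]
    ring_nf
  have hφmem : ∀ t : ℝ, φ t ∈ Set.Icc (0:ℝ) 1 :=
    fun t => ⟨sq_nonneg _, Real.sin_sq_le_one _⟩
  set μ0 : Measure ℝ := volume.restrict (Set.Icc (0:ℝ) 1) with hμ0
  have hμ0prob : IsProbabilityMeasure μ0 := by
    constructor
    rw [hμ0, Measure.restrict_apply_univ, Real.volume_Icc]
    norm_num
  refine ⟨Measure.map φ μ0, ?_, ?_, ?_, ?_, ?_⟩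
  · exact Measure.isProbabilityMeasure_map hφc.aemeasurable
  · rw [Measure.map_apply hφc.measurable measurableSet_Icc.compl]
    have : φ ⁻¹' (Set.Icc (0:ℝ) 1)ᶜ = ∅ := by
      ext t
      simp only [Set.mem_preimage, Set.mem_compl_iff, Set.mem_empty_iff_false, iff_false,
        not_not]
      exact hφmem t
    rw [this]
    simp
  · -- no atoms
    intro x
    rw [Measure.map_apply hφc.measurable (measurableSet_singleton x), hμ0,
      Measure.restrict_apply (hφc.measurable (measurableSet_singleton x))]
    have hmono : StrictMonoOn φ (Set.Icc (0:ℝ) 1) := by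
      intro s hs t ht hst
      rw [hφhalf s, hφhalf t]
      have h1 : Real.cos (Real.pi * t) < Real.cos (Real.pi * s) := by
        apply Real.strictAntiOn_cos
        · constructor
          · exact mul_nonneg Real.pi_pos.le hs.1
          · nlinarith [Real.pi_pos, hs.1, hs.2]
        · constructor
          · exact mul_nonneg Real.pi_pos.le ht.1
          · nlinarith [Real.pi_pos, ht.1, ht.2]
        · nlinarith [Real.pi_pos]
      linarith
    have hsub : (φ ⁻¹' {x} ∩ Set.Icc (0:ℝ) 1).Subsingleton := by
      intro a ha b hb
      exact hmono.injOn ha.2 hb.2 (ha.1.trans hb.1.symm)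
    exact hsub.measure_zero _
  · -- positivity on open sets meeting [0,1]
    intro U hU ⟨x, hxU, hx01⟩
    have hxcl : x ∈ closure (Set.Ioo (0:ℝ) 1) := by
      rw [closure_Ioo (by norm_num : (0:ℝ) ≠ 1)]
      exact hx01
    obtain ⟨y, hyU, hy01⟩ := mem_closure_iff.mp hxcl U hU hxU
    have hφ0 : φ 0 = 0 := by simp [hφdef]
    have hφ1 : φ 1 = 1 := by
      rw [hφhalf 1]
      simp [Real.cos_pi]
    have : y ∈ φ '' Set.Ioo (0:ℝ) 1 := by
      apply intermediate_value_Ioo (by norm_num : (0:ℝ) ≤ 1) hφc.continuousOn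
      rw [hφ0, hφ1]
      exact hy01
    obtain ⟨t, ht01, hφt⟩ := this
    have htU : t ∈ φ ⁻¹' U := by simp [Set.mem_preimage, hφt, hyU]
    obtain ⟨ε, hε, hball⟩ := Metric.isOpen_iff.mp (hU.preimage hφc) t htU
    rw [Measure.map_apply hφc.measurable hU.measurableSet, hμ0,
      Measure.restrict_apply (hφc.measurable hU.measurableSet)]
    set a : ℝ := max (t - ε) 0 with ha
    set b : ℝ := min (t + ε) 1 with hb
    have hab : a < b := by
      rw [ha, hb]
      rcases ht01 with ⟨ht0, ht1⟩
      apply max_lt <;> apply lt_min <;> linarith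
    have hIoo : Set.Ioo a b ⊆ φ ⁻¹' U ∩ Set.Icc (0:ℝ) 1 := by
      intro s hs
      constructor
      · apply hball
        rw [Metric.mem_ball, Real.dist_eq, abs_lt]
        constructor
        · have : t - ε ≤ a := le_max_left _ _
          linarith [hs.1]
        · have : b ≤ t + ε := min_le_left _ _
          linarith [hs.2]
      · constructor
        · have : (0:ℝ) ≤ a := le_max_right _ _
          linarith [hs.1]
        · have : b ≤ 1 := min_le_right _ _
          linarith [hs.2]
    calc (0:ℝ≥0∞) < volume (Set.Ioo a b) := by
          rw [Real.volume_Ioo]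
          simp [hab, ENNReal.ofReal_pos, sub_pos]
      _ ≤ volume (φ ⁻¹' U ∩ Set.Icc (0:ℝ) 1) := measure_mono hIoo
  · -- the integral bound
    intro g hg
    set N : ℕ := 2 ^ k with hN
    have hNdeg : g.natDegree < N := by
      calc g.natDegree ≤ 2 ^ (k - 3) := hg
        _ < 2 ^ k := Nat.pow_lt_pow_right one_lt_two (Nat.sub_lt (by omega) (by norm_num))
    have hN1 : 1 ≤ N := Nat.one_le_two_pow
    have hcont : Continuous fun x : ℝ => |(fun z : ℝ => 4 * z * (1 - z))^[k] x - g.eval x| := by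
      apply Continuous.abs
      apply Continuous.sub
      · exact Continuous.iterate (by fun_prop) k
      · exact g.continuous
    rw [MeasureTheory.integral_map hφc.aemeasurable hcont.aestronglyMeasurable]
    rw [hμ0, MeasureTheory.integral_Icc_eq_integral_Ioc,
      ← intervalIntegral.integral_of_le (zero_le_one)]
    set A : ℝ → ℝ := fun t =>
      (1 - Real.cos ((N:ℝ) * Real.pi * t)) / 2 - g.eval ((1 - Real.cos (Real.pi * t)) / 2)
      with hAdef
    have hA : ∀ t : ℝ, |(fun z : ℝ => 4 * z * (1 - z))^[k] (φ t) - g.eval (φ t)| = |A t| := by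
      intro t
      have h1 : (fun z : ℝ => 4 * z * (1 - z))^[k] (φ t)
          = (1 - Real.cos ((N:ℝ) * Real.pi * t)) / 2 := by
        rw [hφdef]
        simp only
        rw [iter_f k (Real.pi * t / 2), Real.sin_sq_eq_half_sub]
        have e : 2 * (2 ^ k * (Real.pi * t / 2)) = (N:ℝ) * Real.pi * t := by
          rw [hN]
          push_cast
          ring
        rw [e]
        ring
      rw [h1, hφhalf t]
    rw [intervalIntegral.integral_congr (fun t _ => hA t)]
    have hAc : Continuous A := by
      rw [hAdef]
      apply Continuous.sub
      · fun_prop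
      · exact g.continuous.comp (by fun_prop)
    have hwc : Continuous fun t : ℝ => -Real.cos ((N:ℝ) * Real.pi * t) := by fun_prop
    have int1 : IntervalIntegrable (fun t => A t * (-Real.cos ((N:ℝ) * Real.pi * t)))
        volume 0 1 := (hAc.mul hwc).intervalIntegrable _ _
    have int2 : IntervalIntegrable (fun t => |A t|) volume 0 1 :=
      hAc.abs.intervalIntegrable _ _
    have mono : (∫ t in (0:ℝ)..1, A t * (-Real.cos ((N:ℝ) * Real.pi * t)))
        ≤ ∫ t in (0:ℝ)..1, |A t| := by
      apply intervalIntegral.integral_mono_on zero_le_one int1 int2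
      intro t _
      refine le_trans (le_abs_self _) ?_
      rw [abs_mul, abs_neg]
      exact mul_le_of_le_one_right (abs_nonneg _) (Real.abs_cos_le_one _)
    have key : (∫ t in (0:ℝ)..1, A t * (-Real.cos ((N:ℝ) * Real.pi * t))) = 1/4 := by
      have e : ∀ t : ℝ, A t * (-Real.cos ((N:ℝ) * Real.pi * t))
          = -(((1 - Real.cos ((N:ℝ) * Real.pi * t)) / 2) * Real.cos ((N:ℝ) * Real.pi * t))
            + g.eval ((1 - Real.cos (Real.pi * t)) / 2) * Real.cos ((N:ℝ) * Real.pi * t) := by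
        intro t
        rw [hAdef]
        ring
      rw [intervalIntegral.integral_congr (fun t _ => e t)]
      have ia : IntervalIntegrable (fun t =>
          -(((1 - Real.cos ((N:ℝ) * Real.pi * t)) / 2) * Real.cos ((N:ℝ) * Real.pi * t)))
          volume 0 1 := by
        apply Continuous.intervalIntegrable
        fun_prop
      have ib : IntervalIntegrable (fun t =>
          g.eval ((1 - Real.cos (Real.pi * t)) / 2) * Real.cos ((N:ℝ) * Real.pi * t))
          volume 0 1 := by
        apply Continuous.intervalIntegrable
        exact (g.continuous.comp (by fun_prop)).mul (by fun_prop)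
      rw [intervalIntegral.integral_add ia ib, intervalIntegral.integral_neg,
        integral_h_cos N hN1, integral_g_cos g N hNdeg]
      norm_num
    rw [ge_iff_le]
    linarith
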